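/- For every integer q ≥ 3 and every integer n ≥ 3, every word of CBFS_q(n) is bifix-free, i.e. CBFS_q(n) ⊆ BF_q(n). -/
import Mathlib


/-- Value of a letter: 1 ↦ +1, 0 ↦ -1, other letters ↦ 0. -/
def mval (a : ℕ) : ℤ := if a = 1 then 1 else if a = 0 then -1 else 0

/-- Value-sum of a word. -/
def vsum (w : List ℕ) : ℤ := (w.map mval).sum

/-- A (q-2)-colored Motzkin word over the alphabet Z_q = {0,...,q-1}:
all letters < q, every prefix has nonnegative value-sum, total value-sum 0. -/
def IsMotzkinWord (q : ℕ) (w : List ℕ) : Prop :=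
  (∀ a ∈ w, a < q) ∧ (∀ u, u <+: w → 0 ≤ vsum u) ∧ vsum w = 0

/-- The set 𝓜_{q-2}(n) of (q-2)-colored Motzkin words of length n. -/
def MotzkinSet (q n : ℕ) : Set (List ℕ) := {w | w.length = n ∧ IsMotzkinWord q w}

/-- M_{q-2}(n), the number of (q-2)-colored Motzkin words of length n. -/
noncomputable def Mnum (q n : ℕ) : ℕ := (MotzkinSet q n).ncard

/-- The set Ê_{q-2}(n) of elevated (q-2)-colored Motzkin words of length n:
words 1α0 with α ∈ 𝓜_{q-2}(n-2). -/
def ElevatedSet (q n : ℕ) : Set (List ℕ) :=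
  {w | w.length = n ∧ ∃ α ∈ MotzkinSet q (n - 2), w = 1 :: (α ++ [0])}

/-- The set A_q(n). -/
def SetA (q n : ℕ) : Set (List ℕ) :=
  {w | ∃ i ≤ n / 2, ∃ α ∈ MotzkinSet q i, ∃ β ∈ ElevatedSet q (n - i), w = α ++ β} \
    {w | ∃ α ∈ ElevatedSet q (n / 2), ∃ β ∈ ElevatedSet q (n / 2), w = α ++ β}

/-- The set B_q(n). -/
def SetB (q n : ℕ) : Set (List ℕ) :=
  {w | ∃ i ≤ n / 2 - 1, ∃ α ∈ MotzkinSet q i, ∃ β ∈ ElevatedSet q (n - i - 1),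
    w = 1 :: (α ++ β)}

/-- The set C_q(n): words γ0 with γ a (q-2)-colored Motzkin word of length n-1
having no factor which is an elevated Motzkin word of length j ≥ ⌈n/2⌉. -/
def SetC (q n : ℕ) : Set (List ℕ) :=
  {w | ∃ γ ∈ MotzkinSet q (n - 1),
    (∀ j, (n + 1) / 2 ≤ j → ∀ β ∈ ElevatedSet q j, ¬ β <:+: γ) ∧ w = γ ++ [0]}

/-- The cross-bifix-free candidate set CBFS_q(n). -/
def CBFS (q n : ℕ) : Set (List ℕ) := SetA q n ∪ SetB q n ∪ SetC q n

/-- A word is bifix-free if no nonempty proper prefix of it is also a suffix of it. -/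
def BifixFree (w : List ℕ) : Prop :=
  ∀ u, u <+: w → u ≠ [] → u.length < w.length → ¬ u <:+ w

/-- BF_q(n): the set of bifix-free words of length n over Z_q. -/
def BF (q n : ℕ) : Set (List ℕ) := {w | w.length = n ∧ (∀ a ∈ w, a < q) ∧ BifixFree w}

/-- F_{k,q}(n): the number of words of length n over Z_q avoiding k consecutive 0's. -/
noncomputable def Fcount (k q n : ℕ) : ℕ :=
  {w : List ℕ | w.length = n ∧ (∀ a ∈ w, a < q) ∧ ¬ List.replicate k 0 <:+: w}.ncard

/-- The set S_{k,q}(n) of Bajic--Stojanovic--Chee--Kiah type words: words s of length n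
over Z_q with s₁ = ⋯ = s_k = 0, s_{k+1} ≠ 0, s_n ≠ 0, and such that the subword
s_{k+2} ⋯ s_{n-1} contains no k consecutive 0's. -/
def SetS (q k n : ℕ) : Set (List ℕ) :=
  {s | s.length = n ∧ (∀ a ∈ s, a < q) ∧ s.take k = List.replicate k 0 ∧
    s.getD k 0 ≠ 0 ∧ s.getLast? ≠ some 0 ∧
    ¬ List.replicate k 0 <:+: (s.drop (k + 1)).take (n - k - 2)}


@[simp] lemma vsum_nil : vsum [] = 0 := rfl

@[simp] lemma vsum_cons (a : ℕ) (l : List ℕ) : vsum (a :: l) = mval a + vsum l := by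
  simp [vsum]

@[simp] lemma vsum_append (a b : List ℕ) : vsum (a ++ b) = vsum a + vsum b := by
  simp [vsum]

@[simp] lemma mval_zero : mval 0 = -1 := rfl

@[simp] lemma mval_one : mval 1 = 1 := rfl

lemma prefix_append_cases {v a b : List ℕ} (h : v <+: a ++ b) :
    v <+: a ∨ ∃ v', v' <+: b ∧ v = a ++ v' := by
  rcases le_or_gt v.length a.length with hle | hlt
  · exact Or.inl (List.prefix_of_prefix_length_le h (List.prefix_append a b) hle)
  · right
    obtain ⟨v', rfl⟩ := List.prefix_of_prefix_length_le (List.prefix_append a b) h hlt.le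
    exact ⟨v', (List.prefix_append_right_inj a).mp h, rfl⟩

lemma elev_struct {q m : ℕ} {β : List ℕ} (hβ : β ∈ ElevatedSet q m) :
    ∃ γ, γ ∈ MotzkinSet q (m - 2) ∧ β = 1 :: (γ ++ [0]) ∧ β.length = m := by
  obtain ⟨hlen, γ, hγ, rfl⟩ := hβ
  exact ⟨γ, hγ, rfl, hlen⟩

lemma elev_vsum {q m : ℕ} {β : List ℕ} (hβ : β ∈ ElevatedSet q m) : vsum β = 0 := by
  obtain ⟨γ, hγ, rfl, -⟩ := elev_struct hβ
  simp [hγ.2.2.2]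

lemma elev_two_le_length {q m : ℕ} {β : List ℕ} (hβ : β ∈ ElevatedSet q m) :
    2 ≤ β.length := by
  obtain ⟨γ, hγ, rfl, -⟩ := elev_struct hβ
  simp

lemma elev_letters {q m : ℕ} {β : List ℕ} (hβ : β ∈ ElevatedSet q m) (hq : 3 ≤ q) :
    ∀ a ∈ β, a < q := by
  obtain ⟨γ, hγ, rfl, -⟩ := elev_struct hβ
  intro a ha
  simp at ha
  rcases ha with rfl | ha | rfl
  · omega
  · exact hγ.2.1 a ha
  · omega

lemma elev_prefix {q m : ℕ} {β v : List ℕ} (hβ : β ∈ ElevatedSet q m)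
    (hv : v <+: β) : 0 ≤ vsum v ∧ (v ≠ [] → v.length < β.length → 1 ≤ vsum v) := by
  obtain ⟨γ, hγ, rfl, -⟩ := elev_struct hβ
  rcases v with _ | ⟨a, v⟩
  · simp
  · rw [List.cons_prefix_cons] at hv
    obtain ⟨rfl, hv⟩ := hv
    rcases prefix_append_cases hv with h | ⟨v', hv', rfl⟩
    · have h0 := hγ.2.2.1 v h
      constructor
      · simp; linarith
      · intro _ _; simp; linarith
    · have hγ0 := hγ.2.2.2
      rcases v' with _ | ⟨b, v'⟩
      · constructor
        · simp [hγ0]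
        · intro _ _; simp [hγ0]
      · rw [List.cons_prefix_cons] at hv'
        obtain ⟨rfl, hv'⟩ := hv'
        have : v' = [] := List.prefix_nil.mp hv'
        subst this
        constructor
        · simp [hγ0]
        · intro _ hlen
          simp at hlen

lemma elev_prefix_nonneg {q m : ℕ} {β v : List ℕ} (hβ : β ∈ ElevatedSet q m)
    (hv : v <+: β) : 0 ≤ vsum v := (elev_prefix hβ hv).1

lemma elev_prefix_pos {q m : ℕ} {β v : List ℕ} (hβ : β ∈ ElevatedSet q m)
    (hv : v <+: β) (hne : v ≠ []) (hlt : v.length < β.length) : 1 ≤ vsum v :=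
  (elev_prefix hβ hv).2 hne hlt

lemma motz_elev_prefix_nonneg {q i m : ℕ} {α β v : List ℕ} (hα : α ∈ MotzkinSet q i)
    (hβ : β ∈ ElevatedSet q m) (hv : v <+: α ++ β) : 0 ≤ vsum v := by
  rcases prefix_append_cases hv with h | ⟨v', hv', rfl⟩
  · exact hα.2.2.1 v h
  · rw [vsum_append, hα.2.2.2, zero_add]
    exact elev_prefix_nonneg hβ hv'

/-- Every word of CBFS_q(n) is bifix-free, i.e. CBFS_q(n) ⊆ BF_q(n). -/
theorem cbfs_subset_bifix_free (q n : ℕ) (hq : 3 ≤ q) (hn : 3 ≤ n) :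
    CBFS q n ⊆ BF q n := by
  intro w hw
  rcases hw with (hA | hB) | hC
  · -- Case A
    obtain ⟨hmem, hnot⟩ := hA
    obtain ⟨i, hi, α, hα, β, hβ, rfl⟩ := hmem
    have hαl : α.length = i := hα.1
    have hβl : β.length = n - i := hβ.1
    have hβ2 : 2 ≤ β.length := elev_two_le_length hβ
    have hlen : (α ++ β).length = n := by
      simp [hαl, hβl] at *; omega
    refine ⟨hlen, ?_, ?_⟩
    · intro a ha
      rcases List.mem_append.mp ha with h | h
      · exact hα.2.1 a h
      · exact elev_letters hβ hq a h
    · intro u hu hne hlt hsuf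
      obtain ⟨p, hp⟩ := hsuf
      have hpfx : p <+: α ++ β := ⟨u, hp⟩
      have hplen : p.length + u.length = n := by
        have := congrArg List.length hp
        simpa [hlen] using this
      have hsum0 : vsum p + vsum u = 0 := by
        have := congrArg vsum hp
        rw [vsum_append, vsum_append, hα.2.2.2, elev_vsum hβ] at this
        linarith
      have hunn : 0 ≤ vsum u := motz_elev_prefix_nonneg hα hβ hu
      have hpnn : 0 ≤ vsum p := motz_elev_prefix_nonneg hα hβ hpfx
      have hu0 : vsum u = 0 := by linarith
      have hp0 : vsum p = 0 := by linarith
      -- any prefix of length in (i, n) has positive vsum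
      have hpos : ∀ v, v <+: α ++ β → i < v.length → v.length < n → 1 ≤ vsum v := by
        intro v hv h1 h2
        rcases prefix_append_cases hv with h | ⟨v', hv', rfl⟩
        · exact absurd (h.length_le) (by omega)
        · rw [vsum_append, hα.2.2.2, zero_add]
          refine elev_prefix_pos hβ hv' ?_ ?_
          · intro h; subst h; simp at h1; omega
          · have hl : (α ++ v').length < n := h2
            rw [List.length_append, hαl] at hl
            rw [hβl]
            omega
      have hule : u.length ≤ i := by
        by_contra h
        have := hpos u hu (by omega) (by rw [hlen] at hlt; exact hlt)
        omega
      have hune : u.length ≠ 0 := by simpa using (List.length_eq_zero_iff).not.mpr hne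
      have hple : p.length ≤ i := by
        by_contra h
        have := hpos p hpfx (by omega) (by omega)
        omega
      -- forces n even, i = n / 2, u.length = i, n - i = i
      have hieq : u.length = i ∧ p.length = i ∧ i + i = n ∧ i = n / 2 := by omega
      obtain ⟨hui, hpi, hii, hin⟩ := hieq
      -- u = α
      have huα : u = α := by
        have h1 : u <+: α :=
          List.prefix_of_prefix_length_le hu (List.prefix_append α β) (by omega)
        exact h1.eq_of_length (by omega)
      -- u = β
      have huβ : u = β := by
        have h1 : u <:+ β :=
          List.suffix_of_suffix_length_le ⟨p, hp⟩ (List.suffix_append α β) (by omega)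
        exact h1.eq_of_length (by omega)
      apply hnot
      have hβn : β ∈ ElevatedSet q (n / 2) := by
        have : n - i = n / 2 := by omega
        rwa [this] at hβ
      exact ⟨α, by rw [huα] at huβ; rw [huβ]; exact hβn, β, hβn, rfl⟩
  · -- Case B
    obtain ⟨i, hi, α, hα, β, hβ, rfl⟩ := hB
    have hαl : α.length = i := hα.1
    have hβl : β.length = n - i - 1 := hβ.1
    have hβ2 : 2 ≤ β.length := elev_two_le_length hβ
    have hlen : (1 :: (α ++ β)).length = n := by
      simp [hαl, hβl] at *; omega
    refine ⟨hlen, ?_, ?_⟩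
    · intro a ha
      simp at ha
      rcases ha with rfl | h | h
      · omega
      · exact hα.2.1 a h
      · exact elev_letters hβ hq a h
    · intro u hu hne hlt hsuf
      have hpos : ∀ v, v <+: 1 :: (α ++ β) → v ≠ [] → 1 ≤ vsum v := by
        intro v hv hvne
        rcases v with _ | ⟨a, v⟩
        · exact absurd rfl hvne
        · rw [List.cons_prefix_cons] at hv
          obtain ⟨rfl, hv⟩ := hv
          have := motz_elev_prefix_nonneg hα hβ hv
          simp; linarith
      have hwsum : vsum (1 :: (α ++ β)) = 1 := by
        simp [hα.2.2.2, elev_vsum hβ]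
      obtain ⟨p, hp⟩ := hsuf
      have hpne : p ≠ [] := by
        intro h; subst h
        simp at hp
        rw [hp] at hlt; omega
      have h1 := hpos u hu hne
      have h2 := hpos p ⟨u, hp⟩ hpne
      have := congrArg vsum hp
      rw [vsum_append, hwsum] at this
      linarith
  · -- Case C
    obtain ⟨γ, hγ, hfac, rfl⟩ := hC
    have hγl : γ.length = n - 1 := hγ.1
    have hlen : (γ ++ [0]).length = n := by simp [hγl]; omega
    refine ⟨hlen, ?_, ?_⟩
    · intro a ha
      rcases List.mem_append.mp ha with h | h
      · exact hγ.2.1 a h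
      · simp at h; omega
    · intro u hu hne hlt hsuf
      have hwsum : vsum (γ ++ [0]) = -1 := by simp [hγ.2.2.2]
      have hpfxγ : ∀ v, v <+: γ ++ [0] → v.length < n → 0 ≤ vsum v := by
        intro v hv hvl
        have : v <+: γ :=
          List.prefix_of_prefix_length_le hv (List.prefix_append γ [0]) (by omega)
        exact hγ.2.2.1 v this
      obtain ⟨p, hp⟩ := hsuf
      have hplen : p.length + u.length = n := by
        have := congrArg List.length hp
        simpa [hlen] using this
      have hune : u.length ≠ 0 := by simpa using (List.length_eq_zero_iff).not.mpr hne
      have h1 := hpfxγ u hu (by rw [hlen] at hlt; exact hlt)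
      have h2 := hpfxγ p ⟨u, hp⟩ (by omega)
      have := congrArg vsum hp
      rw [vsum_append, hwsum] at this
      linarith
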